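/- Let n ≥ 3 and 0 ≤ k ≤ n−2. The spindle at k over {1,…,n−1} is dot irreducible, i.e. it contains no horizontal line, no box, no hexagon of type 1, no hexagon of type 2, no double box, and no double hexagon. -/

import Mathlib

/-- The underlying sequence of a dot graph given as a list of ascending
segments `(p, q)`: segment `(p, q)` contributes `p, p+1, …, q`. -/
def toSeq (L : List (ℕ × ℕ)) : List ℕ :=
  L.flatMap fun s => List.range' s.1 (s.2 - s.1 + 1)

/-- `L` is the list of maximal ascending segments of a sawtooth dot graph over
`{1, …, n-1}`: `1 ≤ pᵢ ≤ qᵢ ≤ n-1` for all `i`, and `p_{i+1} ≤ q_i` for all `i`. -/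
def IsSawtooth (n : ℕ) (L : List (ℕ × ℕ)) : Prop :=
  (∀ s ∈ L, 1 ≤ s.1 ∧ s.1 ≤ s.2 ∧ s.2 ≤ n - 1) ∧
  ∀ (i : ℕ) (h : i + 1 < L.length),
    (L.get ⟨i + 1, h⟩).1 ≤ (L.get ⟨i, Nat.lt_of_succ_lt h⟩).2

/-- A sawtooth dot graph (given by its segment list) is dot reducible if it
contains a horizontal line, a box, a hexagon of type 1 or 2, a double box, or
a double hexagon. -/
def DotReducible (L : List (ℕ × ℕ)) : Prop :=
  -- horizontal line
  (∃ (i : ℕ) (h : i + 1 < L.length),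
      (L.get ⟨i, Nat.lt_of_succ_lt h⟩).2 = (L.get ⟨i + 1, h⟩).1) ∨
  -- box
  (∃ i j : Fin L.length, i < j ∧
      (L.get i).1 ≤ (L.get j).1 ∧ (L.get i).2 ≤ (L.get j).2) ∨
  -- hexagon of type 1
  (∃ i j l : Fin L.length, i < j ∧ j < l ∧
      (L.get i).1 ≤ (L.get j).1 ∧ (L.get i).2 ≤ (L.get l).2 ∧
      (L.get l).1 ≤ (L.get j).2) ∨
  -- hexagon of type 2
  (∃ i j l : Fin L.length, i < j ∧ j < l ∧
      (L.get i).1 ≤ (L.get l).1 ∧ (L.get j).2 ≤ (L.get l).2 ∧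
      (L.get j).1 ≤ (L.get i).2) ∨
  -- double box
  (∃ i j l : Fin L.length, i < j ∧ j < l ∧
      (L.get i).2 ≤ (L.get j).2 ∧ (L.get j).1 ≤ (L.get l).1 ∧
      (L.get i).1 ≤ (L.get l).2 + 1) ∨
  -- double hexagon
  (∃ i j l m : Fin L.length, i < j ∧ j ≤ l ∧ l < m ∧
      (L.get i).1 ≤ (L.get j).1 ∧ (L.get l).2 ≤ (L.get m).2)

/-- The spindle at `k` over `{1, …, n-1}`: segments `(s, n-1)` for
`s = n-1` down to `k+2`, then `(1, n-1)`, then `(1, t)` for `t = k` down to `1`. -/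
def spindle (n k : ℕ) : List (ℕ × ℕ) :=
  ((List.range (n - 2 - k)).map fun i => (n - 1 - i, n - 1)) ++
    [(1, n - 1)] ++
    ((List.range k).map fun i => (1, k - i))

/-- `L` is a maximal dot irreducible sawtooth dot graph over `{1, …, n-1}`:
it is dot irreducible, and every sawtooth dot graph over `{1, …, n-1}`
containing it as a proper subsequence is dot reducible. -/
def MaxDotIrreducible (n : ℕ) (L : List (ℕ × ℕ)) : Prop :=
  IsSawtooth n L ∧ ¬ DotReducible L ∧
  ∀ M : List (ℕ × ℕ), IsSawtooth n M → List.Sublist (toSeq L) (toSeq M) →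
    toSeq L ≠ toSeq M → DotReducible M

/-- Spindles are dot irreducible. -/
lemma spindle_length (n k : ℕ) : (spindle n k).length = (n - 2 - k) + 1 + k := by
  simp [spindle]; omega

lemma spindle_get (n k i : ℕ) (h : i < (spindle n k).length) :
    (spindle n k)[i] = if i < n - 2 - k then (n - 1 - i, n - 1)
      else if i = n - 2 - k then (1, n - 1) else (1, k - (i - (n - 2 - k) - 1)) := by
  rw [spindle_length] at h
  simp only [spindle]
  rcases lt_trichotomy i (n - 2 - k) with hi | hi | hi
  · rw [List.getElem_append_left (by simp; omega), List.getElem_append_left (by simpa using hi)]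
    simp [hi]
  · rw [List.getElem_append_left (by simp; omega), List.getElem_append_right (by simp; omega)]
    simp [hi]
  · rw [List.getElem_append_right (by simp; omega)]
    simp only [List.length_append, List.length_map, List.length_range, List.length_cons,
      List.getElem_map, List.getElem_range, List.length_singleton]
    rw [if_neg (by omega), if_neg (by omega)]
    congr 1

theorem spindle_dot_irreducible (n k : ℕ) (hn : 3 ≤ n) (hk : k ≤ n - 2) :
    ¬ DotReducible (spindle n k) := by
  have hlen : (spindle n k).length = (n - 2 - k) + 1 + k := spindle_length n k
  have hfst : ∀ (i : ℕ) (h : i < (spindle n k).length),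
      (spindle n k)[i].1 = if i < n - 2 - k then n - 1 - i else 1 := by
    intro i h; rw [spindle_get n k i h]; split_ifs <;> rfl
  have hsnd : ∀ (i : ℕ) (h : i < (spindle n k).length),
      (spindle n k)[i].2 = if i ≤ n - 2 - k then n - 1
        else k - (i - (n - 2 - k) - 1) := by
    intro i h; rw [spindle_get n k i h]; split_ifs <;> simp_all <;> omega
  rintro (⟨i, h, heq⟩ | ⟨i, j, hij, h1, h2⟩ | ⟨i, j, l, hij, hjl, h1, h2, h3⟩ |
    ⟨i, j, l, hij, hjl, h1, h2, h3⟩ | ⟨i, j, l, hij, hjl, h1, h2, h3⟩ |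
    ⟨i, j, l, m, hij, hjl, hlm, h1, h2⟩)
  · simp only [List.get_eq_getElem] at heq
    rw [hsnd _ (Nat.lt_of_succ_lt h), hfst _ h] at heq
    split_ifs at heq <;> omega
  · have hij' : (i : ℕ) < j := hij
    have hi := i.isLt; have hj := j.isLt
    simp only [List.get_eq_getElem] at h1 h2
    rw [hfst _ i.isLt, hfst _ j.isLt] at h1
    rw [hsnd _ i.isLt, hsnd _ j.isLt] at h2
    split_ifs at h1 h2 <;> omega
  · have hij' : (i : ℕ) < j := hij
    have hjl' : (j : ℕ) < l := hjl
    have hi := i.isLt; have hj := j.isLt; have hl := l.isLt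
    simp only [List.get_eq_getElem] at h1 h2 h3
    rw [hfst _ i.isLt, hfst _ j.isLt] at h1
    rw [hsnd _ i.isLt, hsnd _ l.isLt] at h2
    rw [hfst _ l.isLt, hsnd _ j.isLt] at h3
    split_ifs at h1 h2 h3 <;> omega
  · have hij' : (i : ℕ) < j := hij
    have hjl' : (j : ℕ) < l := hjl
    have hi := i.isLt; have hj := j.isLt; have hl := l.isLt
    simp only [List.get_eq_getElem] at h1 h2 h3
    rw [hfst _ i.isLt, hfst _ l.isLt] at h1
    rw [hsnd _ j.isLt, hsnd _ l.isLt] at h2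
    rw [hfst _ j.isLt, hsnd _ i.isLt] at h3
    split_ifs at h1 h2 h3 <;> omega
  · have hij' : (i : ℕ) < j := hij
    have hjl' : (j : ℕ) < l := hjl
    have hi := i.isLt; have hj := j.isLt; have hl := l.isLt
    simp only [List.get_eq_getElem] at h1 h2 h3
    rw [hsnd _ i.isLt, hsnd _ j.isLt] at h1
    rw [hfst _ j.isLt, hfst _ l.isLt] at h2
    rw [hfst _ i.isLt, hsnd _ l.isLt] at h3
    split_ifs at h1 h2 h3 <;> omega
  · have hij' : (i : ℕ) < j := hij
    have hjl' : (j : ℕ) ≤ l := hjl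
    have hlm' : (l : ℕ) < m := hlm
    have hi := i.isLt; have hj := j.isLt; have hl := l.isLt; have hm := m.isLt
    simp only [List.get_eq_getElem] at h1 h2
    rw [hfst _ i.isLt, hfst _ j.isLt] at h1
    rw [hsnd _ l.isLt, hsnd _ m.isLt] at h2
    split_ifs at h1 h2 <;> omega
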